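/- arXiv:1010.2775 — 3 statements merged into one kernel-verified Lean document; each statement's English description precedes it below -/
import Mathlib

section
/- Let n ≥ 2 and let a₁,…,aₙ ∈ ℝ² (indices taken mod n) be points, not necessarily distinct, with aᵢ ≠ a_{i+1} for every i. Assume that whenever the segments [aᵢ, a_{i+1}] and [a_j, a_{j+1}] intersect, the angle between the oriented segments is less than π/2, i.e. the inner product ⟪a_{i+1} − aᵢ, a_{j+1} − a_j⟫ is positive. Then there exist s ≥ 3 and points b₁,…,b_s ∈ ℝ² (indices mod s) with b_j ≠ b_{j+1} such that: (a) for every j, the segment [b_j, b_{j+1}] is contained in some segment [aᵢ, a_{i+1}] and b_{j+1} − b_j is a positive scalar multiple of a_{i+1} − aᵢ; and (b) the closed polygonal curve Γ(b₁,…,b_s) is simple, i.e. the loop obtained by concatenating the segments [b₁,b₂],…,[b_s,b₁] is injective except at its common starting and ending point. -/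
open RealInnerProductSpace

abbrev E2 := EuclideanSpace ℝ (Fin 2)

/-- The closed polygonal loop through the cyclically indexed vertices `b 0, b 1, …`,
parametrised so that on `[j, j+1]` it traverses the segment `[b j, b (j+1)]` affinely. -/
noncomputable def polyLoop (s : ℕ) (b : ZMod s → E2) : ℝ → E2 :=
  fun t => (1 - Int.fract t) • b ((⌊t⌋ : ℤ) : ZMod s) +
    Int.fract t • b (((⌊t⌋ : ℤ) : ZMod s) + 1)

lemma polyLoop_nat_add (s : ℕ) (b : ZMod s → E2) (k : ℕ) {f : ℝ} (h0 : 0 ≤ f) (h1 : f < 1) :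
    polyLoop s b ((k : ℝ) + f) = (1 - f) • b ((k : ℕ) : ZMod s) + f • b ((k + 1 : ℕ) : ZMod s) := by
  have hfl : ⌊(k : ℝ) + f⌋ = (k : ℤ) := by
    rw [add_comm, Int.floor_add_natCast, Int.floor_eq_zero_iff.mpr ⟨h0, h1⟩, zero_add]
  have hfr : Int.fract ((k : ℝ) + f) = f := by
    rw [Int.fract, hfl]; push_cast; ring
  simp only [polyLoop, hfl, hfr]
  push_cast
  ring_nf

lemma inner_self_pos' {x : E2} (h : x ≠ 0) : 0 < ⟪x, x⟫ := by
  rw [real_inner_self_eq_norm_mul_norm]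
  have := norm_pos_iff.mpr h
  positivity

lemma mem_seg_of_eq {x y P : E2} {f : ℝ} (h0 : 0 ≤ f) (h1 : f ≤ 1)
    (hP : P = (1 - f) • x + f • y) : P ∈ segment ℝ x y :=
  ⟨1 - f, f, by linarith, h0, by ring, hP.symm⟩

set_option maxHeartbeats 2000000 in
theorem main_induction (n : ℕ) : 2 ≤ n → ∀ a : ZMod n → E2,
    (∀ i : ZMod n, a i ≠ a (i + 1)) →
    (∀ i j : ZMod n,
      (segment ℝ (a i) (a (i + 1)) ∩ segment ℝ (a j) (a (j + 1))).Nonempty →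
      0 < ⟪a (i + 1) - a i, a (j + 1) - a j⟫) →
    ∃ s : ℕ, 3 ≤ s ∧ ∃ b : ZMod s → E2,
      (∀ j : ZMod s, b j ≠ b (j + 1)) ∧
      (∀ j : ZMod s, ∃ i : ZMod n,
        segment ℝ (b j) (b (j + 1)) ⊆ segment ℝ (a i) (a (i + 1)) ∧
        ∃ c : ℝ, 0 < c ∧ b (j + 1) - b j = c • (a (i + 1) - a i)) ∧
      (∀ t₁ ∈ Set.Ico (0 : ℝ) (s : ℝ), ∀ t₂ ∈ Set.Ico (0 : ℝ) (s : ℝ),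
        polyLoop s b t₁ = polyLoop s b t₂ → t₁ = t₂) := by
  induction n using Nat.strong_induction_on with
  | _ n IH =>
  intro hn a ha hangle
  -- the case n = 2 is contradictory
  have hn2 : n ≠ 2 := by
    rintro rfl
    have h01 : (0 : ZMod 2) + 1 = 1 := by decide
    have h11 : (1 : ZMod 2) + 1 = 0 := by decide
    have key := hangle 0 1 ⟨a 0, by rw [h01]; exact left_mem_segment ℝ _ _,
      by rw [h11]; exact right_mem_segment ℝ _ _⟩
    rw [h01, h11] at key
    rw [show a 0 - a 1 = -(a 1 - a 0) by module, inner_neg_right] at key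
    have := real_inner_self_nonneg (x := a 1 - a 0)
    linarith
  by_cases hsimp : ∀ t₁ ∈ Set.Ico (0 : ℝ) (n : ℝ), ∀ t₂ ∈ Set.Ico (0 : ℝ) (n : ℝ),
      polyLoop n a t₁ = polyLoop n a t₂ → t₁ = t₂
  · exact ⟨n, by omega, a, ha,
      fun j => ⟨j, subset_rfl, 1, one_pos, (one_smul _ _).symm⟩, hsimp⟩
  push_neg at hsimp
  obtain ⟨t₁', ht₁', t₂', ht₂', heq', hne'⟩ := hsimp
  obtain ⟨t₁, ht₁, t₂, ht₂, heq, hlt⟩ :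
      ∃ t₁ ∈ Set.Ico (0 : ℝ) (n : ℝ), ∃ t₂ ∈ Set.Ico (0 : ℝ) (n : ℝ),
        polyLoop n a t₁ = polyLoop n a t₂ ∧ t₁ < t₂ := by
    rcases lt_or_gt_of_ne hne' with h | h
    · exact ⟨t₁', ht₁', t₂', ht₂', heq', h⟩
    · exact ⟨t₂', ht₂', t₁', ht₁', heq'.symm, h⟩
  -- decompose t₁ and t₂
  set A : ℕ → E2 := fun k => a ((k : ℕ) : ZMod n) with hA
  have hAadd : ∀ k : ℕ, ((k : ZMod n) + 1) = ((k + 1 : ℕ) : ZMod n) := by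
    intro k; push_cast; ring
  have haA : ∀ k : ℕ, A k ≠ A (k + 1) := by
    intro k
    have := ha ((k : ℕ) : ZMod n)
    rwa [hAadd k] at this
  have hangleA : ∀ k l : ℕ,
      (segment ℝ (A k) (A (k + 1)) ∩ segment ℝ (A l) (A (l + 1))).Nonempty →
      0 < ⟪A (k + 1) - A k, A (l + 1) - A l⟫ := by
    intro k l h
    have := hangle ((k : ℕ) : ZMod n) ((l : ℕ) : ZMod n)
    rw [hAadd k, hAadd l] at this
    exact this h
  have hdecomp : ∀ t ∈ Set.Ico (0 : ℝ) (n : ℝ),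
      ∃ k : ℕ, k < n ∧ ∃ f : ℝ, 0 ≤ f ∧ f < 1 ∧ t = (k : ℝ) + f := by
    rintro t ⟨h0, h1⟩
    have hfl0 : 0 ≤ ⌊t⌋ := Int.floor_nonneg.mpr h0
    have hfln : ⌊t⌋ < (n : ℤ) := Int.floor_lt.mpr (by exact_mod_cast h1)
    refine ⟨⌊t⌋.toNat, by omega, Int.fract t, Int.fract_nonneg t, Int.fract_lt_one t, ?_⟩
    have : ((⌊t⌋.toNat : ℤ) : ℝ) = (⌊t⌋ : ℝ) := by rw [Int.toNat_of_nonneg hfl0]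
    push_cast at this ⊢
    rw [this, Int.fract]
    ring
  obtain ⟨k₁, hk₁n, f₁, hf₁0, hf₁1, ht₁eq⟩ := hdecomp t₁ ht₁
  obtain ⟨k₂, hk₂n, f₂, hf₂0, hf₂1, ht₂eq⟩ := hdecomp t₂ ht₂
  have hP : (1 - f₁) • A k₁ + f₁ • A (k₁ + 1) = (1 - f₂) • A k₂ + f₂ • A (k₂ + 1) := by
    have e1 := polyLoop_nat_add n a k₁ hf₁0 hf₁1
    have e2 := polyLoop_nat_add n a k₂ hf₂0 hf₂1
    rw [← ht₁eq] at e1; rw [← ht₂eq] at e2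
    rw [hA]
    rw [← e1, ← e2, heq]
  set P : E2 := (1 - f₁) • A k₁ + f₁ • A (k₁ + 1) with hPdef
  have hPmem₁ : P ∈ segment ℝ (A k₁) (A (k₁ + 1)) := mem_seg_of_eq hf₁0 (le_of_lt hf₁1) rfl
  have hPmem₂ : P ∈ segment ℝ (A k₂) (A (k₂ + 1)) := mem_seg_of_eq hf₂0 (le_of_lt hf₂1) hP
  have hk12 : k₁ ≤ k₂ := by
    by_contra h
    push_neg at h
    have : (k₂ : ℝ) + f₂ < (k₁ : ℝ) + f₁ := by
      have : (k₂ : ℝ) + 1 ≤ (k₁ : ℝ) := by exact_mod_cast Nat.succ_le_of_lt h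
      linarith
    rw [← ht₁eq, ← ht₂eq] at this
    linarith
  -- same edge is impossible
  have hd0 : k₁ ≠ k₂ := by
    rintro rfl
    have hff : f₁ < f₂ := by
      have := hlt; rw [ht₁eq, ht₂eq] at this; linarith
    have hz : (f₂ - f₁) • (A (k₁ + 1) - A k₁) = 0 := by
      linear_combination (norm := module) hP.symm
    rcases smul_eq_zero.mp hz with h | h
    · have : f₂ - f₁ = 0 := h
      linarith
    · exact haA k₁ (sub_eq_zero.mp h).symm
  -- adjacent edges: impossible
  have hd1 : k₂ ≠ k₁ + 1 := by
    rintro rfl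
    have hz : f₂ • (A (k₁ + 1 + 1) - A (k₁ + 1)) = (f₁ - 1) • (A (k₁ + 1) - A k₁) := by
      linear_combination (norm := module) hP.symm
    rcases eq_or_lt_of_le hf₂0 with h0 | h0
    · rw [← h0, zero_smul] at hz
      rcases smul_eq_zero.mp hz.symm with h | h
      · have : f₁ - 1 = 0 := h
        linarith
      · exact haA k₁ (sub_eq_zero.mp h).symm
    · have hpos := hangleA k₁ (k₁ + 1) ⟨P, hPmem₁, hPmem₂⟩
      have hinner : f₂ * ⟪A (k₁ + 1) - A k₁, A (k₁ + 1 + 1) - A (k₁ + 1)⟫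
          = (f₁ - 1) * ⟪A (k₁ + 1) - A k₁, A (k₁ + 1) - A k₁⟫ := by
        have h2 := congrArg (fun v => (⟪A (k₁ + 1) - A k₁, v⟫ : ℝ)) hz
        simp only [real_inner_smul_right] at h2
        exact h2
      have hip : 0 < ⟪A (k₁ + 1) - A k₁, A (k₁ + 1) - A k₁⟫ :=
        inner_self_pos' (sub_ne_zero.mpr (haA k₁).symm)
      nlinarith
  -- wrap-around adjacency: impossible
  have hwrap : ¬(k₁ = 0 ∧ k₂ + 1 = n) := by
    rintro ⟨rfl, hkn⟩
    have hAn : A (k₂ + 1) = A 0 := by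
      rw [hA]; simp only [hkn, ZMod.natCast_self, Nat.cast_zero]
    rw [hAn] at hP
    have hz : f₁ • (A (0 + 1) - A 0) = (f₂ - 1) • (A 0 - A k₂) := by
      linear_combination (norm := module) hP
    rcases eq_or_lt_of_le hf₁0 with h0 | h0
    · rw [← h0, zero_smul] at hz
      rcases smul_eq_zero.mp hz.symm with h | h
      · have : f₂ - 1 = 0 := h
        linarith
      · have : A (k₂ + 1) = A k₂ := by rw [hAn]; exact (sub_eq_zero.mp h)
        exact haA k₂ this.symm
    · have hpos := hangleA k₂ 0 ⟨P, hPmem₂ , hPmem₁⟩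
      rw [hAn] at hpos
      have hinner : f₁ * ⟪A 0 - A k₂, A (0 + 1) - A 0⟫
          = (f₂ - 1) * ⟪A 0 - A k₂, A 0 - A k₂⟫ := by
        have h2 := congrArg (fun v => (⟪A 0 - A k₂, v⟫ : ℝ)) hz
        simp only [real_inner_smul_right] at h2
        exact h2
      have hne2 : A 0 - A k₂ ≠ 0 := by
        rw [← hAn]; exact sub_ne_zero.mpr (haA k₂).symm
      have hip : 0 < ⟪A 0 - A k₂, A 0 - A k₂⟫ := inner_self_pos' hne2
      nlinarith
  have hd2 : k₁ + 2 ≤ k₂ := by omega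
  -- helpers for casting between `a` and `A`
  have hcast : ∀ k : ℕ, a ((k : ℕ) : ZMod n) = A k := fun k => by simp [hA]
  have hcast' : ∀ k : ℕ, a (((k : ℕ) : ZMod n) + 1) = A (k + 1) := fun k => by
    rw [hAadd k]
  have he₁ne : A (k₁ + 1) - A k₁ ≠ 0 := sub_ne_zero.mpr (haA k₁).symm
  have hfirstdiff : A (k₁ + 1) - P = (1 - f₁) • (A (k₁ + 1) - A k₁) := by
    rw [hPdef]; module
  have hfirstne : P ≠ A (k₁ + 1) := by
    intro h
    rcases smul_eq_zero.mp (by rw [← hfirstdiff, h, sub_self] :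
        (1 - f₁) • (A (k₁ + 1) - A k₁) = 0) with hc | hc
    · linarith [hc]
    · exact he₁ne hc
  -- construct the shorter loop
  obtain ⟨m, hm2, hmn, b', hkey⟩ : ∃ m : ℕ, 2 ≤ m ∧ m < n ∧ ∃ b' : ZMod m → E2,
      ∀ l : ZMod m, b' l ≠ b' (l + 1) ∧ ∃ i : ZMod n,
        segment ℝ (b' l) (b' (l + 1)) ⊆ segment ℝ (a i) (a (i + 1)) ∧
        ∃ c : ℝ, 0 < c ∧ b' (l + 1) - b' l = c • (a (i + 1) - a i) := by
    by_cases hf₂ : f₂ = 0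
    · -- the intersection point is the vertex `A k₂`; loop has `k₂ - k₁` edges
      have hPk₂ : P = A k₂ := by rw [hP, hf₂]; module
      set m := k₂ - k₁ with hmdef
      have hm2 : 2 ≤ m := by omega
      have : NeZero m := ⟨by omega⟩
      refine ⟨m, hm2, by omega, fun l => if l.val = 0 then P else A (k₁ + l.val), ?_⟩
      intro l
      simp only
      have hvlt : l.val < m := ZMod.val_lt l
      have hval1 : (l + 1).val = (l.val + 1) % m := by
        rw [ZMod.val_add, ZMod.val_one_eq_one_mod,
          Nat.mod_eq_of_lt (show 1 < m by omega)]
      by_cases hv0 : l.val = 0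
      · -- first edge : from P into A (k₁+1)
        have h1 : (l + 1).val = 1 := by rw [hval1, hv0]; exact Nat.mod_eq_of_lt (by omega)
        rw [if_pos hv0, h1, if_neg (by omega : ¬(1 = 0))]
        refine ⟨hfirstne, ((k₁ : ℕ) : ZMod n), ?_, 1 - f₁, by linarith, ?_⟩
        · rw [hcast k₁, hcast' k₁]
          exact (convex_segment _ _).segment_subset hPmem₁ (right_mem_segment ℝ _ _)
        · rw [hcast k₁, hcast' k₁]
          exact hfirstdiff
      · rcases Nat.lt_or_ge (l.val + 1) m with hlast | hlast
        · -- middle edge : a full edge of `a`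
          have h1 : (l + 1).val = l.val + 1 := by rw [hval1]; exact Nat.mod_eq_of_lt hlast
          rw [if_neg hv0, h1, if_neg (by omega : ¬(l.val + 1 = 0))]
          have hidx : k₁ + (l.val + 1) = (k₁ + l.val) + 1 := by omega
          rw [hidx]
          refine ⟨haA (k₁ + l.val), ((k₁ + l.val : ℕ) : ZMod n), ?_, 1, one_pos, ?_⟩
          · rw [hcast (k₁ + l.val), hcast' (k₁ + l.val)]
          · rw [hcast (k₁ + l.val), hcast' (k₁ + l.val), one_smul]
        · -- last edge : the full edge from A (k₂ - 1) to A k₂ = P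
          have h1 : (l + 1).val = 0 := by
            rw [hval1, (by omega : l.val + 1 = m), Nat.mod_self]
          rw [if_neg hv0, h1, if_pos rfl]
          have hidx : k₁ + l.val = k₂ - 1 := by omega
          have hidx2 : (k₂ - 1) + 1 = k₂ := by omega
          rw [hidx]
          refine ⟨?_, ((k₂ - 1 : ℕ) : ZMod n), ?_, 1, one_pos, ?_⟩
          · rw [hPk₂, ← hidx2]; exact haA (k₂ - 1)
          · rw [hcast (k₂ - 1), hcast' (k₂ - 1), hidx2, hPk₂]
          · rw [hcast (k₂ - 1), hcast' (k₂ - 1), hidx2, hPk₂, one_smul]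
    · -- the intersection point is interior to edge `k₂`; loop has `k₂ - k₁ + 1` edges
      have hf₂pos : 0 < f₂ := lt_of_le_of_ne hf₂0 (Ne.symm hf₂)
      have hlastdiff : P - A k₂ = f₂ • (A (k₂ + 1) - A k₂) := by rw [hP]; module
      have hlastne : A k₂ ≠ P := by
        intro h
        have hz : P - A k₂ ≠ 0 := by
          rw [hlastdiff]
          exact smul_ne_zero hf₂ (sub_ne_zero.mpr (haA k₂).symm)
        exact hz (by rw [← h, sub_self])
      set m := k₂ - k₁ + 1 with hmdef
      have hm2 : 2 ≤ m := by omega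
      have hmn : m < n := by
        rcases Nat.eq_zero_or_pos k₁ with h | h
        · have : k₂ + 1 ≠ n := fun hh => hwrap ⟨h, hh⟩
          omega
        · omega
      have : NeZero m := ⟨by omega⟩
      refine ⟨m, hm2, hmn, fun l => if l.val = 0 then P else A (k₁ + l.val), ?_⟩
      intro l
      simp only
      have hvlt : l.val < m := ZMod.val_lt l
      have hval1 : (l + 1).val = (l.val + 1) % m := by
        rw [ZMod.val_add, ZMod.val_one_eq_one_mod,
          Nat.mod_eq_of_lt (show 1 < m by omega)]
      by_cases hv0 : l.val = 0
      · -- first edge : from P into A (k₁+1)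
        have h1 : (l + 1).val = 1 := by rw [hval1, hv0]; exact Nat.mod_eq_of_lt (by omega)
        rw [if_pos hv0, h1, if_neg (by omega : ¬(1 = 0))]
        refine ⟨hfirstne, ((k₁ : ℕ) : ZMod n), ?_, 1 - f₁, by linarith, ?_⟩
        · rw [hcast k₁, hcast' k₁]
          exact (convex_segment _ _).segment_subset hPmem₁ (right_mem_segment ℝ _ _)
        · rw [hcast k₁, hcast' k₁]
          exact hfirstdiff
      · rcases Nat.lt_or_ge (l.val + 1) m with hlast | hlast
        · -- middle edge : a full edge of `a`
          have h1 : (l + 1).val = l.val + 1 := by rw [hval1]; exact Nat.mod_eq_of_lt hlast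
          rw [if_neg hv0, h1, if_neg (by omega : ¬(l.val + 1 = 0))]
          have hidx : k₁ + (l.val + 1) = (k₁ + l.val) + 1 := by omega
          rw [hidx]
          refine ⟨haA (k₁ + l.val), ((k₁ + l.val : ℕ) : ZMod n), ?_, 1, one_pos, ?_⟩
          · rw [hcast (k₁ + l.val), hcast' (k₁ + l.val)]
          · rw [hcast (k₁ + l.val), hcast' (k₁ + l.val), one_smul]
        · -- last edge : from A k₂ back to P inside edge k₂
          have h1 : (l + 1).val = 0 := by
            rw [hval1, (by omega : l.val + 1 = m), Nat.mod_self]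
          rw [if_neg hv0, h1, if_pos rfl]
          have hidx : k₁ + l.val = k₂ := by omega
          rw [hidx]
          refine ⟨hlastne, ((k₂ : ℕ) : ZMod n), ?_, f₂, hf₂pos, ?_⟩
          · rw [hcast k₂, hcast' k₂]
            exact (convex_segment _ _).segment_subset (left_mem_segment ℝ _ _) hPmem₂
          · rw [hcast k₂, hcast' k₂]
            exact hlastdiff
  -- transfer the hypotheses to the shorter loop and apply the induction hypothesis
  have ha' : ∀ l : ZMod m, b' l ≠ b' (l + 1) := fun l => (hkey l).1
  have hangle' : ∀ l l' : ZMod m,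
      (segment ℝ (b' l) (b' (l + 1)) ∩ segment ℝ (b' l') (b' (l' + 1))).Nonempty →
      0 < ⟪b' (l + 1) - b' l, b' (l' + 1) - b' l'⟫ := by
    rintro l l' ⟨x, hx, hx'⟩
    obtain ⟨i, hsub, c, hc, hdiff⟩ := (hkey l).2
    obtain ⟨i', hsub', c', hc', hdiff'⟩ := (hkey l').2
    rw [hdiff, hdiff', real_inner_smul_left, real_inner_smul_right]
    exact mul_pos hc (mul_pos hc' (hangle i i' ⟨x, hsub hx, hsub' hx'⟩))
  obtain ⟨s, hs3, b, hbne, hbsub, hbsimple⟩ := IH m hmn hm2 b' ha' hangle'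
  refine ⟨s, hs3, b, hbne, ?_, hbsimple⟩
  intro j
  obtain ⟨l, hsub, c, hc, hdiff⟩ := hbsub j
  obtain ⟨i, hsubi, c', hc', hdiffi⟩ := (hkey l).2
  exact ⟨i, hsub.trans hsubi, c * c', mul_pos hc hc', by rw [hdiff, hdiffi, smul_smul]⟩

theorem exists_simple_closed_subpolygon (n : ℕ) (hn : 2 ≤ n) (a : ZMod n → E2)
    (ha : ∀ i : ZMod n, a i ≠ a (i + 1))
    (hangle : ∀ i j : ZMod n,
      (segment ℝ (a i) (a (i + 1)) ∩ segment ℝ (a j) (a (j + 1))).Nonempty →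
      0 < ⟪a (i + 1) - a i, a (j + 1) - a j⟫) :
    ∃ s : ℕ, 3 ≤ s ∧ ∃ b : ZMod s → E2,
      (∀ j : ZMod s, b j ≠ b (j + 1)) ∧
      (∀ j : ZMod s, ∃ i : ZMod n,
        segment ℝ (b j) (b (j + 1)) ⊆ segment ℝ (a i) (a (i + 1)) ∧
        ∃ c : ℝ, 0 < c ∧ b (j + 1) - b j = c • (a (i + 1) - a i)) ∧
      (∀ t₁ ∈ Set.Ico (0 : ℝ) (s : ℝ), ∀ t₂ ∈ Set.Ico (0 : ℝ) (s : ℝ),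
        polyLoop s b t₁ = polyLoop s b t₂ → t₁ = t₂) := by
  exact main_induction n hn a ha hangle
end

section
/- There exists ε > 0 with the following property. Let f and h be commuting C¹ diffeomorphisms of ℝ², each satisfying ‖g(x) − x‖ < ε and ‖Dg(x) − Id‖ < ε for all x ∈ ℝ², and let x ∈ ℝ² be such that f(x) ≠ x. Then for every i ∈ ℤ and every point λ in the segment [f^i(x), f^{i+1}(x)], one has ‖h(λ) − f^i(h(x))‖ ≤ 3 · ‖f^{i+1}(h(x)) − f^i(h(x))‖. -/
/-- A `C¹` diffeomorphism of the plane that is `ε`-close to the identity in the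
`C¹` sense: `‖f(x) - x‖ < ε` and `‖Df(x) - Id‖ < ε` everywhere. -/
def NearIdDiffeo (ε : ℝ) (f : Equiv.Perm E2) : Prop :=
  ContDiff ℝ 1 ⇑f ∧ ContDiff ℝ 1 ⇑f.symm ∧
  (∀ x : E2, ‖f x - x‖ < ε) ∧
  (∀ x : E2, ‖fderiv ℝ (⇑f) x - ContinuousLinearMap.id ℝ E2‖ < ε)

/-- The displacement `h x - h y - (x - y)` is `ε`-Lipschitz-controlled. -/
lemma disp_lip {ε : ℝ} {h : Equiv.Perm E2} (hh : NearIdDiffeo ε h) (a b : E2) :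
    ‖(h a - h b) - (a - b)‖ ≤ ε * ‖a - b‖ := by
  obtain ⟨hc, -, -, hd⟩ := hh
  have hdiff : Differentiable ℝ ⇑h := hc.differentiable one_ne_zero
  have key : ∀ x ∈ (Set.univ : Set E2), DifferentiableAt ℝ (fun z => h z - z) x :=
    fun x _ => (hdiff x).sub differentiableAt_id
  have bound : ∀ x ∈ (Set.univ : Set E2), ‖fderiv ℝ (fun z => h z - z) x‖ ≤ ε := by
    intro x _
    have hF : HasFDerivAt (fun z => h z - z)
        (fderiv ℝ (⇑h) x - ContinuousLinearMap.id ℝ E2) x :=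
      ((hdiff x).hasFDerivAt).sub (hasFDerivAt_id x)
    rw [hF.fderiv]
    exact (hd x).le
  have := Convex.norm_image_sub_le_of_norm_fderiv_le key bound convex_univ
    (Set.mem_univ b) (Set.mem_univ a)
  simpa [sub_sub_sub_comm] using this

theorem image_of_segment_near_iterate :
    ∃ ε > (0 : ℝ), ∀ f h : Equiv.Perm E2,
      NearIdDiffeo ε f → NearIdDiffeo ε h → f * h = h * f →
      ∀ x : E2, f x ≠ x →
      ∀ i : ℤ, ∀ l ∈ segment ℝ ((f ^ i) x) ((f ^ (i + 1)) x),
        ‖h l - (f ^ i) (h x)‖ ≤ 3 * ‖(f ^ (i + 1)) (h x) - (f ^ i) (h x)‖ := by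
  refine ⟨1/2, by norm_num, ?_⟩
  intro f h hf hh hcomm x hx i l hl
  -- commutation: f^i (h x) = h (f^i x)
  have hc : Commute f h := hcomm
  have hcomm' : ∀ j : ℤ, (f ^ j) (h x) = h ((f ^ j) x) := by
    intro j
    have : (f ^ j) * h = h * (f ^ j) := (hc.zpow_left j).eq
    calc (f ^ j) (h x) = ((f ^ j) * h) x := rfl
    _ = (h * (f ^ j)) x := by rw [this]
    _ = h ((f ^ j) x) := rfl
  set A := (f ^ i) x
  set B := (f ^ (i + 1)) x
  -- l in segment: ‖l - A‖ ≤ ‖B - A‖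
  have hlA : ‖l - A‖ ≤ ‖B - A‖ := by
    obtain ⟨s, t, hs, ht, hst, rfl⟩ := hl
    have : s • A + t • B - A = t • (B - A) := by
      have hs1 : s = 1 - t := by linarith
      rw [hs1]; module
    rw [this, norm_smul, Real.norm_of_nonneg ht]
    nlinarith [norm_nonneg (B - A)]
  -- upper bound for h: ‖h l - h A‖ ≤ (3/2) ‖l - A‖
  have hup : ‖h l - h A‖ ≤ (3/2) * ‖l - A‖ := by
    have hd := disp_lip hh l A
    have h1 : ‖h l - h A‖ ≤ ‖(h l - h A) - (l - A)‖ + ‖l - A‖ := by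
      calc ‖h l - h A‖ = ‖((h l - h A) - (l - A)) + (l - A)‖ := by congr 1; abel
      _ ≤ ‖(h l - h A) - (l - A)‖ + ‖l - A‖ := norm_add_le _ _
    linarith
  -- lower bound for h: ‖h B - h A‖ ≥ (1/2) ‖B - A‖
  have hlow : (1/2) * ‖B - A‖ ≤ ‖h B - h A‖ := by
    have hd := disp_lip hh B A
    have h1 : ‖B - A‖ - ‖h B - h A‖ ≤ ‖(h B - h A) - (B - A)‖ := by
      have := norm_sub_norm_le (h B - h A) (B - A)
      have := abs_norm_sub_norm_le (h B - h A) (B - A)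
      rw [abs_sub_le_iff] at this
      linarith [this.2]
    linarith
  have hA' : (f ^ i) (h x) = h A := hcomm' i
  have hB' : (f ^ (i + 1)) (h x) = h B := hcomm' (i + 1)
  rw [hA', hB']
  calc ‖h l - h A‖ ≤ (3/2) * ‖l - A‖ := hup
  _ ≤ (3/2) * ‖B - A‖ := by linarith
  _ = 3 * ((1/2) * ‖B - A‖) := by ring
  _ ≤ 3 * ‖h B - h A‖ := by linarith
end

section
/- For every ε > 0 there exist a C^∞ diffeomorphism g of ℝ² which equals the identity outside a compact set and satisfies ‖g(x) − x‖ < ε for all x ∈ ℝ², and a point p ∈ ℝ² whose orbit O_p(g) = {g^j(p) : j ∈ ℤ} is finite (in particular bounded), such that no fixed point of g lies in the convex hull of O_p(g). -/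
noncomputable section
open Real

def mk2 (a b : ℝ) : E2 := WithLp.toLp 2 ![a, b]

lemma mk2_0 (a b : ℝ) : mk2 a b 0 = a := rfl
lemma mk2_1 (a b : ℝ) : mk2 a b 1 = b := rfl

lemma e2_ext {x y : E2} (h0 : x 0 = y 0) (h1 : x 1 = y 1) : x = y := by
  ext i; fin_cases i <;> assumption

lemma norm_sq_e2 (x : E2) : ‖x‖^2 = x 0 ^2 + x 1 ^2 := by
  rw [EuclideanSpace.norm_eq, Real.sq_sqrt (by positivity)]
  simp [Fin.sum_univ_two, sq_abs]

def rot (α : ℝ) (x : E2) : E2 := mk2 (cos α * x 0 - sin α * x 1) (sin α * x 0 + cos α * x 1)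

lemma rot_zero (x : E2) : rot 0 x = x := by
  apply e2_ext <;> simp [rot, mk2_0, mk2_1]

lemma rot_rot (α β : ℝ) (x : E2) : rot α (rot β x) = rot (α + β) x := by
  apply e2_ext <;>
    simp only [rot, mk2_0, mk2_1, Real.cos_add, Real.sin_add] <;> ring

lemma norm_sq_rot (α : ℝ) (x : E2) : ‖rot α x‖^2 = ‖x‖^2 := by
  rw [norm_sq_e2, norm_sq_e2]
  simp only [rot, mk2_0, mk2_1]
  linear_combination (x 0 ^2 + x 1 ^2) * (Real.sin_sq_add_cos_sq α)

lemma norm_rot (α : ℝ) (x : E2) : ‖rot α x‖ = ‖x‖ := by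
  have h := congrArg Real.sqrt (norm_sq_rot α x)
  rwa [Real.sqrt_sq (norm_nonneg _), Real.sqrt_sq (norm_nonneg _)] at h

lemma rot_pi (x : E2) : rot π x = -x := by
  apply e2_ext <;> simp [rot, mk2_0, mk2_1]

/-- radial bump: 1 on `‖x‖² ≤ 100s²`, 0 on `‖x‖² ≥ 400s²`. -/
def vv (s : ℝ) (x : E2) : ℝ := Real.smoothTransition ((400*s^2 - ‖x‖^2) / (300*s^2))

/-- 1-d bump: 1 on `r² ≤ s²/16`, 0 on `r² ≥ s²/4`. -/
def ww (s r : ℝ) : ℝ := Real.smoothTransition ((s^2/4 - r^2) / (3*s^2/16))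

variable {s : ℝ}

lemma vv_one (hs : 0 < s) {x : E2} (h : ‖x‖^2 ≤ 100*s^2) : vv s x = 1 := by
  apply Real.smoothTransition.one_of_one_le
  rw [le_div_iff₀ (by positivity)]; nlinarith

lemma vv_zero (hs : 0 < s) {x : E2} (h : 400*s^2 ≤ ‖x‖^2) : vv s x = 0 := by
  apply Real.smoothTransition.zero_of_nonpos
  apply div_nonpos_of_nonpos_of_nonneg (by nlinarith) (by positivity)

lemma vv_congr {x y : E2} (h : ‖x‖ = ‖y‖) : vv s x = vv s y := by
  rw [vv, vv, h]

lemma ww_zero (hs : 0 < s) {r : ℝ} (h : s^2/4 ≤ r^2) : ww s r = 0 := by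
  apply Real.smoothTransition.zero_of_nonpos
  apply div_nonpos_of_nonpos_of_nonneg (by nlinarith) (by positivity)

lemma ww_at_zero (hs : 0 < s) : ww s 0 = 1 := by
  apply Real.smoothTransition.one_of_one_le
  rw [le_div_iff₀ (by positivity)]; nlinarith

lemma ww_nonneg (r : ℝ) : 0 ≤ ww s r := Real.smoothTransition.nonneg _
lemma ww_le_one (r : ℝ) : ww s r ≤ 1 := Real.smoothTransition.le_one _

def Tfun (s : ℝ) (x : E2) : E2 := mk2 (x 0) (x 1 + s * ww s (x 0))
def Tinv (s : ℝ) (x : E2) : E2 := mk2 (x 0) (x 1 - s * ww s (x 0))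
def Sfun (s : ℝ) (x : E2) : E2 := rot (π * vv s x) x
def Sinv (s : ℝ) (x : E2) : E2 := rot (-(π * vv s x)) x

def Tperm (s : ℝ) : Equiv.Perm E2 where
  toFun := Tfun s
  invFun := Tinv s
  left_inv := fun x => by apply e2_ext <;> simp [Tfun, Tinv, mk2_0, mk2_1]
  right_inv := fun x => by apply e2_ext <;> simp [Tfun, Tinv, mk2_0, mk2_1]

lemma vv_Sfun (x : E2) : vv s (Sfun s x) = vv s x := vv_congr (norm_rot _ _)
lemma vv_Sinv (x : E2) : vv s (Sinv s x) = vv s x := vv_congr (norm_rot _ _)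

def Sperm (s : ℝ) : Equiv.Perm E2 where
  toFun := Sfun s
  invFun := Sinv s
  left_inv := fun x => by
    show Sinv s (Sfun s x) = x
    rw [Sinv, vv_Sfun, Sfun, rot_rot, neg_add_cancel, rot_zero]
  right_inv := fun x => by
    show Sfun s (Sinv s x) = x
    rw [Sfun, vv_Sinv, Sinv, rot_rot, add_neg_cancel, rot_zero]

def gperm (s : ℝ) : Equiv.Perm E2 := (Tperm s).trans ((Sperm s).trans (Tperm s).symm)

lemma gperm_apply (x : E2) : gperm s x = Tinv s (Sfun s (Tfun s x)) := rfl
lemma gperm_symm_apply (y : E2) : (gperm s).symm y = Tinv s (Sinv s (Tfun s y)) := rfl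

lemma contDiff_coord (i : Fin 2) : ContDiff ℝ (⊤ : ℕ∞) (fun x : E2 => x i) :=
  (EuclideanSpace.proj i : E2 →L[ℝ] ℝ).contDiff

lemma contDiff_mk2 {A B : E2 → ℝ} (hA : ContDiff ℝ (⊤ : ℕ∞) A) (hB : ContDiff ℝ (⊤ : ℕ∞) B) :
    ContDiff ℝ (⊤ : ℕ∞) (fun x : E2 => mk2 (A x) (B x)) := by
  have : (fun x : E2 => mk2 (A x) (B x)) =
      (EuclideanSpace.equiv (Fin 2) ℝ : E2 ≃L[ℝ] (Fin 2 → ℝ)).symm ∘ fun x => ![A x, B x] := by funext x; rfl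
  rw [this]
  refine (ContinuousLinearEquiv.contDiff _).comp (contDiff_pi.2 ?_)
  intro i; fin_cases i
  · exact hA
  · exact hB

lemma contDiff_vv : ContDiff ℝ (⊤ : ℕ∞) (vv s) :=
  Real.smoothTransition.contDiff.comp
    (((contDiff_const.sub (contDiff_norm_sq ℝ)).div_const _))

lemma contDiff_ww : ContDiff ℝ (⊤ : ℕ∞) (ww s) :=
  Real.smoothTransition.contDiff.comp
    (((contDiff_const.sub (contDiff_id.pow 2)).div_const _))

lemma contDiff_Tfun : ContDiff ℝ (⊤ : ℕ∞) (Tfun s) :=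
  contDiff_mk2 (contDiff_coord 0)
    ((contDiff_coord 1).add (contDiff_const.mul (contDiff_ww.comp (contDiff_coord 0))))

lemma contDiff_Tinv : ContDiff ℝ (⊤ : ℕ∞) (Tinv s) :=
  contDiff_mk2 (contDiff_coord 0)
    ((contDiff_coord 1).sub (contDiff_const.mul (contDiff_ww.comp (contDiff_coord 0))))

lemma contDiff_rot_vv (c : ℝ) : ContDiff ℝ (⊤ : ℕ∞) (fun x : E2 => rot (c * vv s x) x) := by
  have hangle : ContDiff ℝ (⊤ : ℕ∞) (fun x : E2 => c * vv s x) := contDiff_const.mul contDiff_vv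
  exact contDiff_mk2
    (((Real.contDiff_cos.comp hangle).mul (contDiff_coord 0)).sub
      ((Real.contDiff_sin.comp hangle).mul (contDiff_coord 1)))
    (((Real.contDiff_sin.comp hangle).mul (contDiff_coord 0)).add
      ((Real.contDiff_cos.comp hangle).mul (contDiff_coord 1)))

lemma contDiff_Sfun : ContDiff ℝ (⊤ : ℕ∞) (Sfun s) := contDiff_rot_vv π

lemma contDiff_Sinv : ContDiff ℝ (⊤ : ℕ∞) (Sinv s) := by
  have h := contDiff_rot_vv (s := s) (-π)
  have : Sinv s = fun x : E2 => rot (-π * vv s x) x := by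
    funext x; rw [Sinv, neg_mul]
  rw [this]; exact h

lemma contDiff_g : ContDiff ℝ (⊤ : ℕ∞) ⇑(gperm s) :=
  (contDiff_Tinv (s := s)).comp ((contDiff_Sfun (s := s)).comp (contDiff_Tfun (s := s)))

lemma contDiff_gsymm : ContDiff ℝ (⊤ : ℕ∞) ⇑(gperm s).symm :=
  (contDiff_Tinv (s := s)).comp ((contDiff_Sinv (s := s)).comp (contDiff_Tfun (s := s)))

def pp (s : ℝ) : E2 := mk2 s 0
def qq (s : ℝ) : E2 := mk2 (-s) 0

lemma Tfun_pp (hs : 0 < s) : Tfun s (pp s) = pp s := by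
  apply e2_ext
  · rfl
  · show pp s 1 + s * ww s (pp s 0) = pp s 1
    rw [pp, mk2_0, mk2_1, ww_zero hs (by nlinarith)]; ring

lemma Tfun_qq (hs : 0 < s) : Tfun s (qq s) = qq s := by
  apply e2_ext
  · rfl
  · show qq s 1 + s * ww s (qq s 0) = qq s 1
    rw [qq, mk2_0, mk2_1, ww_zero hs (by nlinarith)]; ring

lemma Tinv_pp (hs : 0 < s) : Tinv s (pp s) = pp s := by
  have h := Tfun_pp hs
  have := (Tperm s).left_inv (pp s)
  simpa [Tperm, h] using this

lemma Tinv_qq (hs : 0 < s) : Tinv s (qq s) = qq s := by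
  have h := Tfun_qq hs
  have := (Tperm s).left_inv (qq s)
  simpa [Tperm, h] using this

lemma norm_sq_pp : ‖pp s‖^2 = s^2 := by rw [norm_sq_e2]; simp [pp, mk2_0, mk2_1]
lemma norm_sq_qq : ‖qq s‖^2 = s^2 := by rw [norm_sq_e2]; simp [qq, mk2_0, mk2_1]

lemma Sfun_one {x : E2} (h : vv s x = 1) : Sfun s x = -x := by
  rw [Sfun, h, mul_one, rot_pi]

lemma Sfun_pp (hs : 0 < s) : Sfun s (pp s) = qq s := by
  rw [Sfun_one (vv_one hs (by rw [norm_sq_pp]; nlinarith))]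
  apply e2_ext <;> simp [pp, qq, mk2_0, mk2_1]

lemma Sfun_qq (hs : 0 < s) : Sfun s (qq s) = pp s := by
  rw [Sfun_one (vv_one hs (by rw [norm_sq_qq]; nlinarith))]
  apply e2_ext <;> simp [pp, qq, mk2_0, mk2_1]

lemma g_pp (hs : 0 < s) : gperm s (pp s) = qq s := by
  rw [gperm_apply, Tfun_pp hs, Sfun_pp hs, Tinv_qq hs]

lemma g_qq (hs : 0 < s) : gperm s (qq s) = pp s := by
  rw [gperm_apply, Tfun_qq hs, Sfun_qq hs, Tinv_pp hs]

lemma ginv_pp (hs : 0 < s) : (gperm s)⁻¹ (pp s) = qq s := by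
  conv_lhs => rw [← g_qq hs]
  exact Equiv.symm_apply_apply _ _

lemma ginv_qq (hs : 0 < s) : (gperm s)⁻¹ (qq s) = pp s := by
  conv_lhs => rw [← g_pp hs]
  exact Equiv.symm_apply_apply _ _

lemma orbit_mem (hs : 0 < s) (j : ℤ) :
    ((gperm s) ^ j) (pp s) = pp s ∨ ((gperm s) ^ j) (pp s) = qq s := by
  induction j using Int.induction_on with
  | zero => left; rfl
  | succ k ih =>
    have hpow : (gperm s) ^ ((k : ℤ) + 1) = gperm s * (gperm s) ^ (k : ℤ) := by
      rw [add_comm, zpow_add, zpow_one]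
    rw [hpow, Equiv.Perm.mul_apply]
    rcases ih with h | h
    · right; rw [h, g_pp hs]
    · left; rw [h, g_qq hs]
  | pred k ih =>
    have hpow : (gperm s) ^ (-(k : ℤ) - 1) = (gperm s)⁻¹ * (gperm s) ^ (-(k : ℤ)) := by
      rw [sub_eq_add_neg, add_comm, zpow_add, zpow_neg_one]
    rw [hpow, Equiv.Perm.mul_apply]
    rcases ih with h | h
    · right; rw [h, ginv_pp hs]
    · left; rw [h, ginv_qq hs]

lemma orbit_subset (hs : 0 < s) :
    (Set.range fun j : ℤ => ((gperm s) ^ j) (pp s)) ⊆ {pp s, qq s} := by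
  rintro _ ⟨j, rfl⟩
  rcases orbit_mem hs j with h | h
  · left; exact h
  · right; exact h

lemma Sfun_of_vv_zero {x : E2} (h : vv s x = 0) : Sfun s x = x := by
  rw [Sfun, h, mul_zero, rot_zero]

lemma g_eq_id (hs : 0 < s) {x : E2} (h : 400*s^2 ≤ ‖Tfun s x‖^2) : gperm s x = x := by
  rw [gperm_apply, Sfun_of_vv_zero (vv_zero hs h)]
  exact (Tperm s).left_inv x

lemma Tfun_Tinv (z : E2) : Tfun s (Tinv s z) = z := by
  apply e2_ext <;> simp [Tfun, Tinv, mk2_0, mk2_1]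

lemma g_support (hs : 0 < s) {x : E2} (h : x ∉ Metric.closedBall (0 : E2) (100*s)) :
    gperm s x = x := by
  apply g_eq_id hs
  rw [Metric.mem_closedBall, not_le, dist_zero_right] at h
  have hx2 : 10000*s^2 < ‖x‖^2 := by nlinarith [norm_nonneg x]
  rw [norm_sq_e2] at hx2
  have hT : ‖Tfun s x‖^2 = x 0 ^2 + (x 1 + s * ww s (x 0))^2 := by
    rw [norm_sq_e2]; rfl
  rw [hT]
  set c := s * ww s (x 0) with hc
  have hc2 : c^2 ≤ s^2 := by
    have hw0 : 0 ≤ ww s (x 0) := ww_nonneg _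
    have hw1 : ww s (x 0) ≤ 1 := ww_le_one _
    rw [hc, mul_pow]
    nlinarith [mul_nonneg (sub_nonneg.2 hw1) (by linarith : (0:ℝ) ≤ 1 + ww s (x 0)), sq_nonneg s]
  nlinarith [sq_nonneg (x 1 + 2 * c)]

lemma g_close (hs : 0 < s) (x : E2) : ‖gperm s x - x‖^2 < 10000*s^2 := by
  by_cases h : 400*s^2 ≤ ‖Tfun s x‖^2
  · rw [g_eq_id hs h]; simp; nlinarith
  · push_neg at h
    set y := Tfun s x with hy
    set z := Sfun s y with hz
    have hzn : ‖z‖^2 < 400*s^2 := by rw [hz, Sfun, norm_sq_rot]; exact h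
    rw [norm_sq_e2] at h hzn
    have hgx : gperm s x = Tinv s z := rfl
    have hd0 : (gperm s x - x) 0 = z 0 - y 0 := by rw [hgx]; rfl
    have hd1 : (gperm s x - x) 1 = (z 1 - s * ww s (z 0)) - (y 1 - s * ww s (y 0)) := by
      rw [hgx]
      show z 1 - s * ww s (z 0) - x 1 = _
      have hx1 : x 1 = y 1 - s * ww s (y 0) := by
        show x 1 = (x 1 + s * ww s (x 0)) - s * ww s (x 0); ring
      rw [hx1]
    rw [norm_sq_e2, hd0, hd1]
    set A := z 0; set B := z 1; set C := y 0; set D := y 1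
    set u := s * ww s C with hu
    set v := s * ww s A with hv
    have hu0 : 0 ≤ u := mul_nonneg hs.le (ww_nonneg _)
    have hus : u ≤ s := by
      rw [hu]; nlinarith [ww_le_one (s := s) C, ww_nonneg (s := s) C]
    have hv0 : 0 ≤ v := mul_nonneg hs.le (ww_nonneg _)
    have hvs : v ≤ s := by
      rw [hv]; nlinarith [ww_le_one (s := s) A, ww_nonneg (s := s) A]
    nlinarith [sq_nonneg (A + C), sq_nonneg (B + D), sq_nonneg (B - D - (u - v)),
      mul_nonneg (by linarith : (0:ℝ) ≤ s - u + v) (by linarith : (0:ℝ) ≤ s + u - v),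
      mul_pos hs hs]

lemma no_fixed_in_segment (hs : 0 < s) {q : E2}
    (hq : q ∈ segment ℝ (pp s) (qq s)) : gperm s q ≠ q := by
  rw [segment_eq_image₂] at hq
  obtain ⟨⟨a, b⟩, ⟨ha, hb, hab⟩, rfl⟩ := hq
  intro hfix
  simp only at ha hb hab hfix
  set q : E2 := a • pp s + b • qq s with hqdef
  have hq0 : q 0 = a * s + b * (-s) := rfl
  have hq1 : q 1 = a * 0 + b * 0 := rfl
  have hS : Sfun s (Tfun s q) = Tfun s q := by
    have h1 : Tfun s (gperm s q) = Tfun s q := congrArg _ hfix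
    rw [gperm_apply, Tfun_Tinv] at h1
    exact h1
  set y := Tfun s q with hy
  have hy0 : y 0 = q 0 := rfl
  have hy1 : y 1 = q 1 + s * ww s (q 0) := rfl
  have hw0 : 0 ≤ ww s (q 0) := ww_nonneg _
  have hw1 : ww s (q 0) ≤ 1 := ww_le_one _
  have hq02 : q 0 ^2 ≤ s^2 := by
    have hb' : b = 1 - a := by linarith
    rw [hq0, hb']
    nlinarith [mul_nonneg (mul_nonneg ha (by linarith : (0:ℝ) ≤ 1 - a)) (sq_nonneg s)]
  have hvy : vv s y = 1 := by
    apply vv_one hs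
    rw [norm_sq_e2, hy0, hy1, hq1]
    nlinarith [mul_pos hs hs,
      mul_nonneg (sub_nonneg.2 hw1) (by linarith : (0:ℝ) ≤ 1 + ww s (q 0)), sq_nonneg s]
  have hneg : -y = y := by rw [← Sfun_one hvy, hS]
  have hy1z : y 1 = 0 := by
    have h2 : -(y 1) = y 1 := congrFun (congrArg (fun v : E2 => (v : Fin 2 → ℝ)) hneg) 1
    linarith
  have hy0z : y 0 = 0 := by
    have h2 : -(y 0) = y 0 := congrFun (congrArg (fun v : E2 => (v : Fin 2 → ℝ)) hneg) 0
    linarith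
  have hq0z : q 0 = 0 := by rw [← hy0]; exact hy0z
  rw [hy1, hq1, hq0z, ww_at_zero hs] at hy1z
  nlinarith

end

theorem counterexample_C0_close_to_identity :
    ∀ ε > (0 : ℝ), ∃ g : Equiv.Perm E2,
      ContDiff ℝ (⊤ : ℕ∞) ⇑g ∧ ContDiff ℝ (⊤ : ℕ∞) ⇑g.symm ∧
      (∃ C : Set E2, IsCompact C ∧ ∀ x ∉ C, g x = x) ∧
      (∀ x : E2, ‖g x - x‖ < ε) ∧
      ∃ p : E2, (Set.range fun j : ℤ => (g ^ j) p).Finite ∧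
        ∀ q : E2, g q = q → q ∉ convexHull ℝ (Set.range fun j : ℤ => (g ^ j) p) := by
  intro ε hε
  set s : ℝ := ε / 100 with hsdef
  have hs : 0 < s := by positivity
  refine ⟨gperm s, contDiff_g, contDiff_gsymm, ⟨Metric.closedBall 0 (100*s),
    isCompact_closedBall _ _, fun x hx => g_support hs hx⟩, ?_, pp s, ?_, ?_⟩
  · intro x
    have h := g_close hs x
    have h10 : 10000 * s^2 = ε^2 := by rw [hsdef]; ring
    rw [h10] at h
    nlinarith [norm_nonneg (gperm s x - x)]
  · exact Set.Finite.subset (Set.Finite.insert _ (Set.finite_singleton _)) (orbit_subset hs)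
  · intro q hfix hq
    have hseg : q ∈ segment ℝ (pp s) (qq s) := by
      have h1 := convexHull_mono (orbit_subset hs) hq
      rwa [convexHull_pair] at h1
    exact no_fixed_in_segment hs hseg hfix
end
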